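/- Let Θ(ν) := ν - sin(ν) for ν ∈ ℝ. Then for every ν ∈ [-φ̄, φ̄] with 0 < φ̄ ≤ π, Θ satisfies the sector bound Sec[0, l_s] with l_s = (φ̄ - sin φ̄)/φ̄, i.e., 0 ≤ ν·Θ(ν) ≤ l_s·ν² for all ν ∈ [-φ̄, φ̄]. -/

import Mathlib

/-- Sector bound Sec[0, l_s] for the inverted-pendulum uncertainty
Θ(ν) = ν - sin ν on [-φ̄, φ̄], with l_s = (φ̄ - sin φ̄)/φ̄. -/
theorem stmt_8 (φbar : ℝ) (h0 : 0 < φbar) (hπ : φbar ≤ Real.pi)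
    (ν : ℝ) (hν : ν ∈ Set.Icc (-φbar) φbar) :
    0 ≤ ν * (ν - Real.sin ν) ∧
    ν * (ν - Real.sin ν) ≤ ((φbar - Real.sin φbar) / φbar) * ν ^ 2 := by
  obtain ⟨hl, hr⟩ := hν
  have habs : |Real.sin ν| ≤ |ν| := Real.abs_sin_le_abs
  constructor
  · nlinarith [abs_nonneg ν, neg_abs_le ν, le_abs_self ν, neg_abs_le (Real.sin ν),
      le_abs_self (Real.sin ν), sq_abs ν, sq_nonneg (|ν| - |Real.sin ν|)]
  · -- key concavity fact: for 0 ≤ x ≤ φbar, x * sin φbar ≤ φbar * sin x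
    have key : ∀ x : ℝ, 0 ≤ x → x ≤ φbar → x * Real.sin φbar ≤ φbar * Real.sin x := by
      intro x hx hxφ
      have hcon := strictConcaveOn_sin_Icc.concaveOn.2
        (Set.mem_Icc.2 ⟨le_rfl, Real.pi_pos.le⟩) (Set.mem_Icc.2 ⟨h0.le, hπ⟩)
        (sub_nonneg.2 (div_le_one_of_le₀ hxφ h0.le))
        (show (0:ℝ) ≤ x / φbar by positivity)
        (show (1 - x / φbar) + x / φbar = 1 by ring)
      have hx' : (1 - x / φbar) • (0:ℝ) + (x / φbar) • φbar = x := by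
        simp only [smul_eq_mul, mul_zero, zero_add]
        field_simp
      rw [hx'] at hcon
      simp only [Real.sin_zero, smul_eq_mul, mul_zero, zero_add] at hcon
      have := mul_le_mul_of_nonneg_left hcon h0.le
      rw [mul_comm] at this
      calc x * Real.sin φbar = φbar * (x / φbar * Real.sin φbar) := by field_simp
        _ ≤ φbar * Real.sin x := by nlinarith
    have h2 : ν ^ 2 * Real.sin φbar ≤ φbar * (ν * Real.sin ν) := by
      rcases le_or_gt 0 ν with h | h
      · have := key ν h hr
        nlinarith
      · have := key (-ν) (by linarith) (by linarith)
        rw [Real.sin_neg] at this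
        nlinarith
    rw [div_mul_eq_mul_div, le_div_iff₀ h0]
    nlinarith
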